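/- Let χ be a Dirichlet character of conductor d. For all positive integers w₁, w₂ and k ≥ 0: w₁^{k-1} Σ_{i=0}^{d w₁ − 1} χ(i) B_{k,χ}((w₂/w₁) i) = w₂^{k-1} Σ_{i=0}^{d w₂ − 1} χ(i) B_{k,χ}((w₁/w₂) i). -/

import Mathlib

open Finset

section Raabe

open Polynomial PowerSeries

/-- The exponential generating series of Bernoulli polynomials evaluated at `t`. -/
noncomputable def bernGF (t : ℂ) : PowerSeries ℂ :=
  PowerSeries.mk fun n => aeval t ((1 / (n.factorial : ℚ)) • Polynomial.bernoulli n)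

lemma expm_ne (m : ℕ) (hm : 0 < m) : (exp ℂ) ^ m - 1 ≠ 0 := by
  intro h
  have h2 := congrArg (PowerSeries.coeff (R := ℂ) 1) h
  rw [exp_pow_eq_rescale_exp] at h2
  simp [coeff_rescale, coeff_exp] at h2
  omega

lemma raabe_series (m : ℕ) (hm : 0 < m) (z : ℂ) :
    rescale (m : ℂ) (∑ l ∈ range m, bernGF (z + l / m)) = (m : ℂ) • bernGF ((m : ℂ) * z) := by
  have hc : ((exp ℂ) ^ m - 1) ≠ 0 := expm_ne m hm
  apply mul_right_cancel₀ hc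
  have hgeo : (exp ℂ - 1) * ∑ l ∈ range m, (exp ℂ) ^ l = (exp ℂ) ^ m - 1 := by
    rw [mul_comm, geom_sum_mul]
  have hm' : (m : ℂ) ≠ 0 := (Nat.cast_ne_zero (R := ℂ)).2 hm.ne'
  calc rescale (m : ℂ) (∑ l ∈ range m, bernGF (z + l / m)) * ((exp ℂ) ^ m - 1)
      = rescale (m : ℂ) ((∑ l ∈ range m, bernGF (z + l / m)) * (exp ℂ - 1)) := by
        rw [map_mul, exp_pow_eq_rescale_exp, map_sub, map_one]
    _ = rescale (m : ℂ) (∑ l ∈ range m, PowerSeries.X * rescale (z + l / m) (exp ℂ)) := by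
        rw [Finset.sum_mul]
        congr 1
        refine Finset.sum_congr rfl fun l _ => ?_
        unfold bernGF
        exact bernoulli_generating_function (z + l / m)
    _ = ∑ l ∈ range m, (PowerSeries.C (m : ℂ) * PowerSeries.X) * rescale ((m : ℂ) * z + l) (exp ℂ) := by
        rw [map_sum]
        refine Finset.sum_congr rfl fun l _ => ?_
        rw [map_mul, rescale_X, rescale_rescale]
        congr 2
        field_simp
    _ = (m : ℂ) • (PowerSeries.X * rescale ((m : ℂ) * z) (exp ℂ) * ∑ l ∈ range m, (exp ℂ) ^ l) := by
        rw [Finset.mul_sum, Finset.smul_sum]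
        refine Finset.sum_congr rfl fun l _ => ?_
        have hre : rescale ((m : ℂ) * z + l) (exp ℂ)
            = rescale ((m : ℂ) * z) (exp ℂ) * (exp ℂ) ^ l := by
          rw [exp_pow_eq_rescale_exp, exp_mul_exp_eq_exp_add]
        rw [hre, PowerSeries.smul_eq_C_mul]
        ring
    _ = (m : ℂ) • bernGF ((m : ℂ) * z) * ((exp ℂ) ^ m - 1) := by
        rw [← hgeo, smul_mul_assoc]
        congr 1
        unfold bernGF
        rw [← mul_assoc, ← bernoulli_generating_function ((m : ℂ) * z)]

/-- Raabe's multiplication theorem for Bernoulli polynomials (over `ℂ`). -/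
lemma raabe (k m : ℕ) (hm : 0 < m) (z : ℂ) :
    (m : ℂ) * aeval ((m : ℂ) * z) (Polynomial.bernoulli k)
      = (m : ℂ) ^ k * ∑ l ∈ range m, aeval (z + (l : ℂ) / m) (Polynomial.bernoulli k) := by
  have h := congrArg (PowerSeries.coeff (R := ℂ) k) (raabe_series m hm z)
  rw [coeff_rescale, map_sum, PowerSeries.coeff_smul] at h
  unfold bernGF at h
  simp only [coeff_mk, map_smul, Algebra.smul_def, map_mul, AlgHom.commutes,
    Algebra.algebraMap_self_apply, smul_eq_mul] at h
  have hfac : (algebraMap ℚ ℂ) (1 / (k.factorial : ℚ)) ≠ 0 := by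
    simp [Nat.factorial_ne_zero]
  apply mul_left_cancel₀ hfac
  calc (algebraMap ℚ ℂ) (1 / (k.factorial : ℚ))
        * ((m : ℂ) * aeval ((m : ℂ) * z) (Polynomial.bernoulli k))
      = (m : ℂ) * ((algebraMap ℚ ℂ) (1 / (k.factorial : ℚ))
          * aeval ((m : ℂ) * z) (Polynomial.bernoulli k)) := by ring
    _ = (m : ℂ) ^ k * ∑ l ∈ range m, (algebraMap ℚ ℂ) (1 / (k.factorial : ℚ))
          * aeval (z + (l : ℂ) / m) (Polynomial.bernoulli k) := h.symm
    _ = (algebraMap ℚ ℂ) (1 / (k.factorial : ℚ)) * ((m : ℂ) ^ k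
          * ∑ l ∈ range m, aeval (z + (l : ℂ) / m) (Polynomial.bernoulli k)) := by
        rw [← Finset.mul_sum]; ring

lemma sum_range_mul' (f : ℕ → ℂ) (m n : ℕ) :
    ∑ i ∈ range (m * n), f i = ∑ j ∈ range n, ∑ b ∈ range m, f (m * j + b) := by
  induction n with
  | zero => simp
  | succ n ih =>
      have h1 : m * (n + 1) = m * n + m := by ring
      rw [h1, Finset.sum_range_succ, ← ih, Finset.range_eq_Ico,
        ← Finset.sum_Ico_consecutive f (Nat.zero_le (m * n)) (Nat.le_add_right (m * n) m)]
      congr 1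
      · rw [Finset.range_eq_Ico]
      rw [Finset.sum_Ico_eq_sum_range]
      have h2 : m * n + m - m * n = m := by omega
      rw [h2]

lemma aeval_step (k d w₁ w₂ : ℕ) (hd : 0 < d) (hw₁ : 0 < w₁) (hw₂ : 0 < w₂) (a b j : ℕ) :
    aeval (((a : ℂ) + (w₂ : ℂ) / w₁ * ((d : ℂ) * j + b)) / d) (Polynomial.bernoulli k)
      = (w₂ : ℂ) ^ ((k : ℤ) - 1) * ∑ l ∈ range w₂,
          aeval (((a : ℂ) * w₁ + (b : ℂ) * w₂ + (d : ℂ) * w₂ * j + (d : ℂ) * w₁ * l)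
            / ((d : ℂ) * w₁ * w₂)) (Polynomial.bernoulli k) := by
  have hd' : (d : ℂ) ≠ 0 := (Nat.cast_ne_zero (R := ℂ)).2 hd.ne'
  have hw₁' : (w₁ : ℂ) ≠ 0 := (Nat.cast_ne_zero (R := ℂ)).2 hw₁.ne'
  have hw₂' : (w₂ : ℂ) ≠ 0 := (Nat.cast_ne_zero (R := ℂ)).2 hw₂.ne'
  set z : ℂ := ((a : ℂ) * w₁ + (b : ℂ) * w₂ + (d : ℂ) * w₂ * j) / ((d : ℂ) * w₁ * w₂) with hz
  have h1 : ((a : ℂ) + (w₂ : ℂ) / w₁ * ((d : ℂ) * j + b)) / d = (w₂ : ℂ) * z := by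
    rw [hz]; field_simp; ring
  have h3 : ∀ l ∈ range w₂,
      aeval (((a : ℂ) * w₁ + (b : ℂ) * w₂ + (d : ℂ) * w₂ * j + (d : ℂ) * w₁ * l)
        / ((d : ℂ) * w₁ * w₂)) (Polynomial.bernoulli k)
      = aeval (z + (l : ℂ) / w₂) (Polynomial.bernoulli k) := by
    intro l _
    have harg : ((a : ℂ) * w₁ + (b : ℂ) * w₂ + (d : ℂ) * w₂ * j + (d : ℂ) * w₁ * l)
        / ((d : ℂ) * w₁ * w₂) = z + (l : ℂ) / w₂ := by
      rw [hz]; field_simp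
    rw [harg]
  rw [h1, Finset.sum_congr rfl h3]
  have hW : (w₂ : ℂ) ^ ((k : ℤ) - 1) = (w₂ : ℂ) ^ k / w₂ := by
    rw [zpow_sub₀ hw₂', zpow_natCast, zpow_one]
  rw [hW]
  apply mul_left_cancel₀ hw₂'
  rw [raabe k w₂ hw₂ z]
  field_simp

end Raabe

/-- Generalized Bernoulli polynomial attached to a Dirichlet character, via the
standard closed formula `B_{n,χ}(x) = d^{n-1} ∑_{a<d} χ(a) B_n((a+x)/d)` which is
equivalent to the generating function definition
`∑_{a<d} χ(a) t e^{at} e^{xt}/(e^{dt}-1) = ∑ B_{n,χ}(x) tⁿ/n!`. -/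
noncomputable def genBernoulliPoly {d : ℕ} (χ : DirichletCharacter ℂ d) (n : ℕ) (x : ℂ) : ℂ :=
  (d : ℂ) ^ ((n : ℤ) - 1) *
    ∑ a ∈ Finset.range d, χ (a : ZMod d) * Polynomial.aeval (((a : ℂ) + x) / d) (Polynomial.bernoulli n)

/-- Generalized Bernoulli number `B_{n,χ} = B_{n,χ}(0)`. -/
noncomputable def genBernoulli {d : ℕ} (χ : DirichletCharacter ℂ d) (n : ℕ) : ℂ :=
  genBernoulliPoly χ n 0

open Polynomial in
lemma key {d : ℕ} (hd : 0 < d) (χ : DirichletCharacter ℂ d) (w₁ w₂ : ℕ)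
    (hw₁ : 0 < w₁) (hw₂ : 0 < w₂) (k : ℕ) :
    (w₁ : ℂ) ^ ((k : ℤ) - 1) * ∑ i ∈ Finset.range (d * w₁),
        χ (i : ZMod d) * genBernoulliPoly χ k ((w₂ : ℂ) / w₁ * i) =
      ((d : ℂ) * w₁ * w₂) ^ ((k : ℤ) - 1) *
        ∑ a ∈ range d, ∑ b ∈ range d, ∑ j ∈ range w₁, ∑ l ∈ range w₂,
          χ (a : ZMod d) * χ (b : ZMod d) *
            aeval (((a : ℂ) * w₁ + (b : ℂ) * w₂ + (d : ℂ) * w₂ * j + (d : ℂ) * w₁ * l)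
              / ((d : ℂ) * w₁ * w₂)) (Polynomial.bernoulli k) := by
  have hre := sum_range_mul'
    (fun i => χ (i : ZMod d) * genBernoulliPoly χ k ((w₂ : ℂ) / w₁ * i)) d w₁
  rw [hre]
  have hterm : ∀ j ∈ range w₁, ∀ b ∈ range d,
      χ ((d * j + b : ℕ) : ZMod d) * genBernoulliPoly χ k ((w₂ : ℂ) / w₁ * ((d * j + b : ℕ) : ℂ))
      = (d : ℂ) ^ ((k : ℤ) - 1) * (w₂ : ℂ) ^ ((k : ℤ) - 1) *
          ∑ a ∈ range d, ∑ l ∈ range w₂,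
            χ (a : ZMod d) * χ (b : ZMod d) *
              aeval (((a : ℂ) * w₁ + (b : ℂ) * w₂ + (d : ℂ) * w₂ * j + (d : ℂ) * w₁ * l)
                / ((d : ℂ) * w₁ * w₂)) (Polynomial.bernoulli k) := by
    intro j _ b _
    have hχ : χ ((d * j + b : ℕ) : ZMod d) = χ (b : ZMod d) := by
      push_cast
      simp
    have hcast : ((d * j + b : ℕ) : ℂ) = (d : ℂ) * j + b := by push_cast; ring
    rw [hχ, hcast]
    unfold genBernoulliPoly
    rw [Finset.sum_congr rfl (fun a (_ : a ∈ range d) => by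
      rw [aeval_step k d w₁ w₂ hd hw₁ hw₂ a b j])]
    simp only [Finset.mul_sum]
    exact Finset.sum_congr rfl fun a _ => Finset.sum_congr rfl fun l _ => by ring
  rw [Finset.sum_congr rfl fun j hj => Finset.sum_congr rfl (hterm j hj)]
  have hpull : ∑ j ∈ range w₁, ∑ b ∈ range d,
      ((d : ℂ) ^ ((k : ℤ) - 1) * (w₂ : ℂ) ^ ((k : ℤ) - 1) *
        ∑ a ∈ range d, ∑ l ∈ range w₂,
          χ (a : ZMod d) * χ (b : ZMod d) *
            aeval (((a : ℂ) * w₁ + (b : ℂ) * w₂ + (d : ℂ) * w₂ * j + (d : ℂ) * w₁ * l)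
              / ((d : ℂ) * w₁ * w₂)) (Polynomial.bernoulli k))
      = (d : ℂ) ^ ((k : ℤ) - 1) * (w₂ : ℂ) ^ ((k : ℤ) - 1) *
        ∑ j ∈ range w₁, ∑ b ∈ range d, ∑ a ∈ range d, ∑ l ∈ range w₂,
          χ (a : ZMod d) * χ (b : ZMod d) *
            aeval (((a : ℂ) * w₁ + (b : ℂ) * w₂ + (d : ℂ) * w₂ * j + (d : ℂ) * w₁ * l)
              / ((d : ℂ) * w₁ * w₂)) (Polynomial.bernoulli k) := by
    rw [Finset.mul_sum]
    refine Finset.sum_congr rfl fun j _ => ?_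
    rw [Finset.mul_sum]
  rw [hpull]
  have hC : (w₁ : ℂ) ^ ((k : ℤ) - 1) * ((d : ℂ) ^ ((k : ℤ) - 1) * (w₂ : ℂ) ^ ((k : ℤ) - 1))
      = ((d : ℂ) * w₁ * w₂) ^ ((k : ℤ) - 1) := by
    rw [mul_zpow, mul_zpow]; ring
  rw [← mul_assoc, hC]
  congr 1
  calc (∑ j ∈ range w₁, ∑ b ∈ range d, ∑ a ∈ range d, ∑ l ∈ range w₂,
          χ (a : ZMod d) * χ (b : ZMod d) *
            aeval (((a : ℂ) * w₁ + (b : ℂ) * w₂ + (d : ℂ) * w₂ * j + (d : ℂ) * w₁ * l)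
              / ((d : ℂ) * w₁ * w₂)) (Polynomial.bernoulli k))
      = ∑ j ∈ range w₁, ∑ a ∈ range d, ∑ b ∈ range d, ∑ l ∈ range w₂,
          χ (a : ZMod d) * χ (b : ZMod d) *
            aeval (((a : ℂ) * w₁ + (b : ℂ) * w₂ + (d : ℂ) * w₂ * j + (d : ℂ) * w₁ * l)
              / ((d : ℂ) * w₁ * w₂)) (Polynomial.bernoulli k) :=
        Finset.sum_congr rfl fun j _ => Finset.sum_comm
    _ = ∑ a ∈ range d, ∑ j ∈ range w₁, ∑ b ∈ range d, ∑ l ∈ range w₂,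
          χ (a : ZMod d) * χ (b : ZMod d) *
            aeval (((a : ℂ) * w₁ + (b : ℂ) * w₂ + (d : ℂ) * w₂ * j + (d : ℂ) * w₁ * l)
              / ((d : ℂ) * w₁ * w₂)) (Polynomial.bernoulli k) := Finset.sum_comm
    _ = ∑ a ∈ range d, ∑ b ∈ range d, ∑ j ∈ range w₁, ∑ l ∈ range w₂,
          χ (a : ZMod d) * χ (b : ZMod d) *
            aeval (((a : ℂ) * w₁ + (b : ℂ) * w₂ + (d : ℂ) * w₂ * j + (d : ℂ) * w₁ * l)
              / ((d : ℂ) * w₁ * w₂)) (Polynomial.bernoulli k) :=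
        Finset.sum_congr rfl fun a _ => Finset.sum_comm

theorem stmt6 {d : ℕ} (hd : 0 < d) (χ : DirichletCharacter ℂ d)
    (w₁ w₂ : ℕ) (hw₁ : 0 < w₁) (hw₂ : 0 < w₂) (k : ℕ) :
    (w₁ : ℂ) ^ ((k : ℤ) - 1) * ∑ i ∈ Finset.range (d * w₁),
        χ (i : ZMod d) * genBernoulliPoly χ k ((w₂ : ℂ) / w₁ * i) =
      (w₂ : ℂ) ^ ((k : ℤ) - 1) * ∑ i ∈ Finset.range (d * w₂),
        χ (i : ZMod d) * genBernoulliPoly χ k ((w₁ : ℂ) / w₂ * i) := by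
  rw [key hd χ w₁ w₂ hw₁ hw₂ k, key hd χ w₂ w₁ hw₂ hw₁ k]
  have hbase : ((d : ℂ) * w₂ * w₁) = ((d : ℂ) * w₁ * w₂) := by ring
  rw [hbase]
  congr 1
  rw [Finset.sum_comm]
  refine Finset.sum_congr rfl fun b _ => Finset.sum_congr rfl fun a _ => ?_
  conv_rhs => rw [Finset.sum_comm]
  refine Finset.sum_congr rfl fun j _ => Finset.sum_congr rfl fun l _ => ?_
  have harg : ((a : ℂ) * w₁ + (b : ℂ) * w₂ + (d : ℂ) * w₂ * j + (d : ℂ) * w₁ * l)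
      / ((d : ℂ) * w₁ * w₂)
      = ((b : ℂ) * w₂ + (a : ℂ) * w₁ + (d : ℂ) * w₁ * l + (d : ℂ) * w₂ * j)
      / ((d : ℂ) * w₁ * w₂) := by ring_nf
  rw [harg, mul_comm (χ (a : ZMod d)) (χ (b : ZMod d))]
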